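/- (Invariance Principle) Let 𝐌 : I^p → I^p be a mean-type mapping and K : I^p → ℝ an arbitrary mean on I. Then K is the unique 𝐌-invariant mean if and only if the sequence of iterates (𝐌ⁿ)_{n∈ℕ} converges pointwise on I^p to the mapping 𝐊 := (K,…,K). -/

import Mathlib

open Filter Set Topology

/-- `M` is a mean on the interval `I` (for `p`-tuples): its value is between the
minimum and the maximum of the arguments, for every tuple with entries in `I`. -/
def IsMean (I : Set ℝ) (p : ℕ) (M : (Fin p → ℝ) → ℝ) : Prop :=
  ∀ v : Fin p → ℝ, (∀ i, v i ∈ I) →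
    sInf (Set.range v) ≤ M v ∧ M v ≤ sSup (Set.range v)

/-- A mean-type mapping: every coordinate function is a mean on `I`, and it maps
`I^p` into `I^p`. -/
def IsMeanType (I : Set ℝ) (p : ℕ) (T : (Fin p → ℝ) → Fin p → ℝ) : Prop :=
  (∀ i, IsMean I p fun v => T v i) ∧
    ∀ v : Fin p → ℝ, (∀ i, v i ∈ I) → ∀ i, T v i ∈ I

/-- The unfolded orbit `O*_𝐌(v)`: the `(n*p + i)`-th term (`0 ≤ i < p`) is the
`i`-th coordinate of `𝐌ⁿ(v)`. -/
def orbitSeq (p : ℕ) (hp : 0 < p) (T : (Fin p → ℝ) → Fin p → ℝ)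
    (v : Fin p → ℝ) : ℕ → ℝ :=
  fun k => (T^[k / p] v) ⟨k % p, Nat.mod_lt k hp⟩

/-- **Invariance Principle.** A mean `K` is the unique `𝐌`-invariant
mean if and only if the iterates `𝐌ⁿ` converge pointwise on `I^p` to `(K,…,K)`. -/
theorem invariance_principle
    {I : Set ℝ} (hne : I.Nonempty) (hI : I.OrdConnected)
    {p : ℕ} (hp : 2 ≤ p)
    (T : (Fin p → ℝ) → Fin p → ℝ) (hT : IsMeanType I p T)
    (K : (Fin p → ℝ) → ℝ) (hK : IsMean I p K) :
    ((∀ v : Fin p → ℝ, (∀ i, v i ∈ I) → K (T v) = K v) ∧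
      ∀ K' : (Fin p → ℝ) → ℝ, IsMean I p K' →
        (∀ v : Fin p → ℝ, (∀ i, v i ∈ I) → K' (T v) = K' v) →
        ∀ v : Fin p → ℝ, (∀ i, v i ∈ I) → K' v = K v) ↔
    ∀ v : Fin p → ℝ, (∀ i, v i ∈ I) →
      ∀ i, Filter.Tendsto (fun n => T^[n] v i) Filter.atTop (nhds (K v)) := by
  have hp0 : 0 < p := by omega
  haveI : Nonempty (Fin p) := ⟨⟨0, hp0⟩⟩
  have hmem : ∀ v : Fin p → ℝ, (∀ i, v i ∈ I) → ∀ n, ∀ i, T^[n] v i ∈ I := by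
    intro v hv n
    induction n with
    | zero => simpa using hv
    | succ n ih => rw [Function.iterate_succ_apply']; exact hT.2 _ ih
  have hbddA : ∀ w : Fin p → ℝ, BddAbove (Set.range w) := fun w => (Set.finite_range w).bddAbove
  have hbddB : ∀ w : Fin p → ℝ, BddBelow (Set.range w) := fun w => (Set.finite_range w).bddBelow
  have hsup : ∀ w : Fin p → ℝ, sSup (Set.range w) = ⨆ j, w j := fun _ => rfl
  have hinf : ∀ w : Fin p → ℝ, sInf (Set.range w) = ⨅ j, w j := fun _ => rfl
  have hMx_anti : ∀ w : Fin p → ℝ, (∀ i, w i ∈ I) →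
      Antitone (fun n => ⨆ j, T^[n] w j) := by
    intro w hw
    apply antitone_nat_of_succ_le
    intro n
    apply ciSup_le
    intro j
    rw [Function.iterate_succ_apply']
    exact le_trans (hT.1 j (T^[n] w) (hmem w hw n)).2 (le_of_eq (hsup _))
  have hMn_mono : ∀ w : Fin p → ℝ, (∀ i, w i ∈ I) →
      Monotone (fun n => ⨅ j, T^[n] w j) := by
    intro w hw
    apply monotone_nat_of_le_succ
    intro n
    apply le_ciInf
    intro j
    rw [Function.iterate_succ_apply']
    exact le_trans (le_of_eq (hinf _).symm) (hT.1 j (T^[n] w) (hmem w hw n)).1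
  have hMnMx : ∀ (w : Fin p → ℝ) (n : ℕ), (⨅ j, T^[n] w j) ≤ ⨆ j, T^[n] w j := by
    intro w n
    exact le_trans (ciInf_le (hbddB _) (Classical.arbitrary _))
      (le_ciSup (hbddA _) (Classical.arbitrary _))
  have hMx_lb : ∀ w : Fin p → ℝ, (∀ i, w i ∈ I) → ∀ n,
      (⨅ j, w j) ≤ ⨆ j, T^[n] w j := by
    intro w hw n
    calc (⨅ j, w j) = ⨅ j, T^[0] w j := by simp
    _ ≤ ⨅ j, T^[n] w j := hMn_mono w hw (Nat.zero_le n)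
    _ ≤ _ := hMnMx w n
  have hMn_ub : ∀ w : Fin p → ℝ, (∀ i, w i ∈ I) → ∀ n,
      (⨅ j, T^[n] w j) ≤ ⨆ j, w j := by
    intro w hw n
    calc (⨅ j, T^[n] w j) ≤ ⨆ j, T^[n] w j := hMnMx w n
    _ ≤ ⨆ j, T^[0] w j := hMx_anti w hw (Nat.zero_le n)
    _ = ⨆ j, w j := by simp
  constructor
  · rintro ⟨hinv, huniq⟩ v hv i
    set Kmax : (Fin p → ℝ) → ℝ := fun w => ⨅ n, ⨆ j, T^[n] w j with hKmaxdef
    set Kmin : (Fin p → ℝ) → ℝ := fun w => ⨆ n, ⨅ j, T^[n] w j with hKmindef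
    have hKmaxMean : IsMean I p Kmax := by
      intro w hw
      rw [hsup, hinf]
      constructor
      · exact le_ciInf fun n => hMx_lb w hw n
      · refine le_trans (ciInf_le ⟨⨅ j, w j, ?_⟩ 0) (by simp)
        rintro x ⟨n, rfl⟩; exact hMx_lb w hw n
    have hKminMean : IsMean I p Kmin := by
      intro w hw
      rw [hsup, hinf]
      constructor
      · refine le_trans (by simp) (le_ciSup (⟨⨆ j, w j, ?_⟩ : BddAbove _) 0)
        rintro x ⟨n, rfl⟩; exact hMn_ub w hw n
      · exact ciSup_le fun n => hMn_ub w hw n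
    have hshift : ∀ (w : Fin p → ℝ) (n : ℕ), T^[n] (T w) = T^[n+1] w := by
      intro w n; rw [Function.iterate_succ_apply]
    have hKmaxInv : ∀ w : Fin p → ℝ, (∀ i, w i ∈ I) → Kmax (T w) = Kmax w := by
      intro w hw
      have hb : BddBelow (Set.range fun n => ⨆ j, T^[n] w j) := by
        refine ⟨⨅ j, w j, ?_⟩; rintro x ⟨n, rfl⟩; exact hMx_lb w hw n
      have hb2 : BddBelow (Set.range fun n => ⨆ j, T^[n] (T w) j) := by
        refine ⟨⨅ j, w j, ?_⟩; rintro x ⟨n, rfl⟩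
        simp only [hshift]; exact hMx_lb w hw (n+1)
      apply le_antisymm
      · apply le_ciInf
        intro n
        refine le_trans (ciInf_le hb2 n) ?_
        simp only [hshift]
        exact hMx_anti w hw (Nat.le_succ n)
      · apply le_ciInf
        intro n
        refine le_trans (ciInf_le hb (n+1)) ?_
        simp only [hshift]; exact le_rfl
    have hKminInv : ∀ w : Fin p → ℝ, (∀ i, w i ∈ I) → Kmin (T w) = Kmin w := by
      intro w hw
      have hb : BddAbove (Set.range fun n => ⨅ j, T^[n] w j) := by
        refine ⟨⨆ j, w j, ?_⟩; rintro x ⟨n, rfl⟩; exact hMn_ub w hw n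
      have hb2 : BddAbove (Set.range fun n => ⨅ j, T^[n] (T w) j) := by
        refine ⟨⨆ j, w j, ?_⟩; rintro x ⟨n, rfl⟩
        simp only [hshift]; exact hMn_ub w hw (n+1)
      apply le_antisymm
      · apply ciSup_le
        intro n
        refine le_trans ?_ (le_ciSup hb (n+1))
        simp only [hshift]; exact le_rfl
      · apply ciSup_le
        intro n
        refine le_trans ?_ (le_ciSup hb2 n)
        simp only [hshift]
        exact hMn_mono w hw (Nat.le_succ n)
    have hmaxK : Kmax v = K v := huniq Kmax hKmaxMean hKmaxInv v hv
    have hminK : Kmin v = K v := huniq Kmin hKminMean hKminInv v hv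
    -- convergence of max/min sequences
    have hMxT : Tendsto (fun n => ⨆ j, T^[n] v j) atTop (𝓝 (K v)) := by
      have := tendsto_atTop_ciInf (hMx_anti v hv)
        (⟨⨅ j, v j, by rintro x ⟨n, rfl⟩; exact hMx_lb v hv n⟩ : BddBelow _)
      rwa [show (⨅ n, ⨆ j, T^[n] v j) = K v from hmaxK] at this
    have hMnT : Tendsto (fun n => ⨅ j, T^[n] v j) atTop (𝓝 (K v)) := by
      have := tendsto_atTop_ciSup (hMn_mono v hv)
        (⟨⨆ j, v j, by rintro x ⟨n, rfl⟩; exact hMn_ub v hv n⟩ : BddAbove _)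
      rwa [show (⨆ n, ⨅ j, T^[n] v j) = K v from hminK] at this
    refine tendsto_of_tendsto_of_tendsto_of_le_of_le hMnT hMxT ?_ ?_
    · intro n; exact ciInf_le (hbddB _) i
    · intro n; exact le_ciSup (hbddA _) i
  · intro h
    constructor
    · -- invariance
      intro v hv
      have h1 : Tendsto (fun n => T^[n] (T v) (Classical.arbitrary _)) atTop (𝓝 (K (T v))) :=
        h (T v) (hT.2 v hv) _
      have h2 : Tendsto (fun n => T^[n] (T v) (Classical.arbitrary _)) atTop (𝓝 (K v)) := by
        have := (h v hv (Classical.arbitrary _)).comp (tendsto_add_atTop_nat 1)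
        simpa [Function.comp_def, Function.iterate_succ_apply] using this
      exact tendsto_nhds_unique h1 h2
    · -- uniqueness
      intro K' hK' hK'inv v hv
      have hiter : ∀ n, K' (T^[n] v) = K' v := by
        intro n
        induction n with
        | zero => simp
        | succ n ih =>
          rw [Function.iterate_succ_apply', hK'inv _ (hmem v hv n), ih]
      have key : ∀ ε : ℝ, 0 < ε → |K' v - K v| ≤ ε := by
        intro ε hε
        have hev : ∀ᶠ n in atTop, ∀ j, T^[n] v j ∈ Metric.ball (K v) ε :=
          eventually_all.2 fun j => (h v hv j) (Metric.ball_mem_nhds _ hε)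
        obtain ⟨n, hn⟩ := hev.exists
        have hub : K' v ≤ K v + ε := by
          rw [← hiter n]
          refine le_trans (hK' _ (hmem v hv n)).2 ?_
          rw [hsup]
          refine ciSup_le fun j => ?_
          have := hn j
          rw [Metric.mem_ball, Real.dist_eq] at this
          linarith [abs_lt.1 this]
        have hlb : K v - ε ≤ K' v := by
          rw [← hiter n]
          refine le_trans ?_ (hK' _ (hmem v hv n)).1
          rw [hinf]
          refine le_ciInf fun j => ?_
          have := hn j
          rw [Metric.mem_ball, Real.dist_eq] at this
          linarith [abs_lt.1 this]
        rw [abs_sub_le_iff]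
        constructor <;> linarith
      by_contra hne'
      have hd : 0 < |K' v - K v| := abs_pos.2 (sub_ne_zero.2 hne')
      have := key (|K' v - K v| / 2) (by linarith)
      linarith
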